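/- There exists a finite colouring Ψ of the set ℕ^(2) = {(a,b) ∈ ℕ × ℕ : a < b} (i.e. a function Ψ : ℕ^(2) → Fin r for some r ∈ ℕ) such that there do not exist two strictly increasing sequences of natural numbers (a_n)_{n≥1} and (b_n)_{n≥1} with a_i < b_i for every i for which the set {(a_n + a_m + 1, b_n + b_m) : n < m} ∪ {(a_n, b_m) : n < m} is monochromatic under Ψ. -/

import Mathlib

private def psi : ℕ × ℕ → Fin 4 := fun p =>
  if 2 ^ p.1 ∣ p.2 then
    (if p.2.factorization 2 % 2 = 0 then 0 else 1)
  else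
    (if p.2.factorization 2 % 2 = 0 then 2 else 3)

private lemma psi_eq {P Q : ℕ × ℕ} (h : psi P = psi Q) :
    ((2 ^ P.1 ∣ P.2) ↔ (2 ^ Q.1 ∣ Q.2)) ∧
      P.2.factorization 2 % 2 = Q.2.factorization 2 % 2 := by
  unfold psi at h
  split_ifs at h with h1 h2 h3 h4 h5 h6 h7 h8 <;>
    first
      | exact absurd h (by decide)
      | exact ⟨by tauto, by omega⟩

/-- There exists a finite colouring `Ψ` of `ℕ^(2)` such that there do not exist
strictly increasing sequences `(a_n)`, `(b_n)` of positive integers with `a_i < b_i`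
for all `i`, for which `{(a_n + a_m + 1, b_n + b_m) : n < m} ∪ {(a_n, b_m) : n < m}`
is monochromatic. -/
theorem stmt_1 :
    ∃ (r : ℕ) (Ψ : ℕ × ℕ → Fin r),
      ¬ ∃ (a b : ℕ → ℕ) (c : Fin r),
        StrictMono a ∧ StrictMono b ∧ (∀ i, 0 < a i) ∧ (∀ i, a i < b i) ∧
        (∀ n m, n < m →
          Ψ (a n + a m + 1, b n + b m) = c ∧ Ψ (a n, b m) = c) := by
  refine ⟨4, psi, ?_⟩
  rintro ⟨a, b, c, ha, hb, hpos, hab, h⟩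
  have h01 : psi (a 0, b 1) = c := (h 0 1 one_pos).2
  have hE1 : ∀ n m, n < m → psi (a n + a m + 1, b n + b m) = psi (a 0, b 1) :=
    fun n m hnm => ((h n m hnm).1).trans h01.symm
  have hE2 : ∀ n m, n < m → psi (a n, b m) = psi (a 0, b 1) :=
    fun n m hnm => ((h n m hnm).2).trans h01.symm
  have hble : ∀ n, n ≤ b n := fun n => hb.le_apply
  have hale : ∀ n, n ≤ a n := fun n => ha.le_apply
  by_cases hd : 2 ^ a 0 ∣ b 1
  · -- first component is "divisible": leads to 2^(a m) ∣ b 1 - b 0 for all large m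
    have hT : ∀ n m, n < m → 2 ^ (a n + a m + 1) ∣ (b n + b m) :=
      fun n m hnm => ((psi_eq (hE1 n m hnm)).1).mpr hd
    set M := b 1 + 2 with hMdef
    have d0 : 2 ^ a M ∣ b 0 + b M :=
      dvd_trans (pow_dvd_pow 2 (by omega)) (hT 0 M (by omega))
    have d1 : 2 ^ a M ∣ b 1 + b M :=
      dvd_trans (pow_dvd_pow 2 (by omega)) (hT 1 M (by omega))
    have dsub : 2 ^ a M ∣ b 1 - b 0 := by
      have hs := Nat.dvd_sub d1 d0
      have heq : b 1 + b M - (b 0 + b M) = b 1 - b 0 := by omega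
      rwa [heq] at hs
    have hb01 : b 0 < b 1 := hb one_pos
    have hle : 2 ^ a M ≤ b 1 - b 0 := Nat.le_of_dvd (by omega) dsub
    have h2p : a M < 2 ^ a M := Nat.lt_two_pow_self
    have hM := hale M
    obtain ⟨X, hX⟩ : ∃ X, 2 ^ a M = X := ⟨_, rfl⟩
    rw [hX] at hle h2p
    omega
  · -- first component is "not divisible": 2-adic valuations of b m are bounded by a 0
    have hF : ∀ n m, n < m → ¬ 2 ^ a n ∣ b m :=
      fun n m hnm hdd => hd (((psi_eq (hE2 n m hnm)).1).mp hdd)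
    have hpar1 : ∀ n m, n < m →
        (b n + b m).factorization 2 % 2 = (b 1).factorization 2 % 2 :=
      fun n m hnm => (psi_eq (hE1 n m hnm)).2
    have hpar2 : ∀ m, 0 < m →
        (b m).factorization 2 % 2 = (b 1).factorization 2 % 2 :=
      fun m hm => (psi_eq (hE2 0 m hm)).2
    have hbne : ∀ m, 0 < m → b m ≠ 0 := fun m hm => by have := hble m; omega
    have hval : ∀ m, 0 < m → (b m).factorization 2 < a 0 := by
      intro m hm
      by_contra hge
      exact hF 0 m hm
        ((Nat.Prime.pow_dvd_iff_le_factorization Nat.prime_two (hbne m hm)).mpr (by omega))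
    -- key pair lemma: two indices with equal 2-adic valuation w give 4 ∣ sum of odd parts
    have L : ∀ w i j, 0 < i → i < j → (b i).factorization 2 = w →
        (b j).factorization 2 = w → 4 ∣ (b i / 2 ^ w + b j / 2 ^ w) := by
      intro w i j hi hij hwi hwj
      have hbi := hbne i hi
      have hbj := hbne j (by omega)
      have hx : 2 ^ w * (b i / 2 ^ w) = b i := by
        have hh := Nat.ordProj_mul_ordCompl_eq_self (b i) 2
        rwa [hwi] at hh
      have hy : 2 ^ w * (b j / 2 ^ w) = b j := by
        have hh := Nat.ordProj_mul_ordCompl_eq_self (b j) 2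
        rwa [hwj] at hh
      have hoi : ¬ 2 ∣ (b i / 2 ^ w) := by
        have hh := Nat.not_dvd_ordCompl Nat.prime_two hbi
        rwa [hwi] at hh
      have hoj : ¬ 2 ∣ (b j / 2 ^ w) := by
        have hh := Nat.not_dvd_ordCompl Nat.prime_two hbj
        rwa [hwj] at hh
      obtain ⟨oi, hoidef⟩ : ∃ o, b i / 2 ^ w = o := ⟨_, rfl⟩
      obtain ⟨oj, hojdef⟩ : ∃ o, b j / 2 ^ w = o := ⟨_, rfl⟩
      rw [hoidef] at hx hoi
      rw [hojdef] at hy hoj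
      rw [hoidef, hojdef]
      have hoo : oi + oj ≠ 0 := by omega
      have hsum : b i + b j = 2 ^ w * (oi + oj) := by rw [Nat.mul_add, hx, hy]
      have hfac : (b i + b j).factorization 2 = w + (oi + oj).factorization 2 := by
        rw [hsum, Nat.factorization_mul (pow_ne_zero w two_ne_zero) hoo]
        simp [Nat.Prime.factorization_pow Nat.prime_two]
      have h2o : (2:ℕ) ∣ oi + oj := by omega
      have hge1 : 1 ≤ (oi + oj).factorization 2 :=
        (Nat.Prime.pow_dvd_iff_le_factorization Nat.prime_two hoo).mp (by simpa using h2o)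
      have hp1 := hpar1 i j hij
      have hp2 := hpar2 j (by omega)
      rw [hwj] at hp2
      have he : (oi + oj).factorization 2 % 2 = 0 := by omega
      have h4 : 2 ^ 2 ∣ oi + oj :=
        (Nat.Prime.pow_dvd_iff_le_factorization Nat.prime_two hoo).mpr (by omega)
      exact (by norm_num : (2:ℕ) ^ 2 = 4) ▸ h4
    -- pigeonhole: three indices with the same 2-adic valuation
    obtain ⟨w, hw, hfib⟩ :=
      Finset.exists_lt_card_fiber_of_mul_lt_card_of_maps_to
        (s := Finset.Icc 1 (2 * a 0 + 1)) (t := Finset.range (a 0))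
        (f := fun m => (b m).factorization 2) (n := 2)
        (fun x hx => by
          simp only [Finset.mem_Icc] at hx
          exact Finset.mem_range.mpr (hval x (by omega)))
        (by rw [Finset.card_range, Nat.card_Icc]; omega)
    obtain ⟨m1, m2, m3, hm1, hm2, hm3, h12, h13, h23⟩ := Finset.two_lt_card_iff.mp hfib
    simp only [Finset.mem_filter, Finset.mem_Icc] at hm1 hm2 hm3
    have hodd1 : ¬ 2 ∣ b m1 / 2 ^ w := by
      have hh := Nat.not_dvd_ordCompl Nat.prime_two (hbne m1 (by omega))
      rwa [hm1.2] at hh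
    have hodd2 : ¬ 2 ∣ b m2 / 2 ^ w := by
      have hh := Nat.not_dvd_ordCompl Nat.prime_two (hbne m2 (by omega))
      rwa [hm2.2] at hh
    have hodd3 : ¬ 2 ∣ b m3 / 2 ^ w := by
      have hh := Nat.not_dvd_ordCompl Nat.prime_two (hbne m3 (by omega))
      rwa [hm3.2] at hh
    have d12 : 4 ∣ b m1 / 2 ^ w + b m2 / 2 ^ w := by
      rcases Nat.lt_or_ge m1 m2 with hlt | hge
      · exact L w m1 m2 (by omega) hlt hm1.2 hm2.2
      · have hh := L w m2 m1 (by omega) (by omega) hm2.2 hm1.2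
        rwa [Nat.add_comm] at hh
    have d13 : 4 ∣ b m1 / 2 ^ w + b m3 / 2 ^ w := by
      rcases Nat.lt_or_ge m1 m3 with hlt | hge
      · exact L w m1 m3 (by omega) hlt hm1.2 hm3.2
      · have hh := L w m3 m1 (by omega) (by omega) hm3.2 hm1.2
        rwa [Nat.add_comm] at hh
    have d23 : 4 ∣ b m2 / 2 ^ w + b m3 / 2 ^ w := by
      rcases Nat.lt_or_ge m2 m3 with hlt | hge
      · exact L w m2 m3 (by omega) hlt hm2.2 hm3.2
      · have hh := L w m3 m2 (by omega) (by omega) hm3.2 hm2.2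
        rwa [Nat.add_comm] at hh
    obtain ⟨o1, e1⟩ : ∃ o, b m1 / 2 ^ w = o := ⟨_, rfl⟩
    obtain ⟨o2, e2⟩ : ∃ o, b m2 / 2 ^ w = o := ⟨_, rfl⟩
    obtain ⟨o3, e3⟩ : ∃ o, b m3 / 2 ^ w = o := ⟨_, rfl⟩
    rw [e1] at hodd1 d12 d13
    rw [e2] at hodd2 d12 d23
    rw [e3] at hodd3 d13 d23
    omega
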